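/- Let X be a pure k-dimensional simplicial complex, f : X(k) → {±1}, and X̂ the f-local lift. For every (k-2)-face σ̂ ∈ X̂(k-2) with σ = π(σ̂), the link X̂_{σ̂} is isomorphic to the 2-lift of the 1-skeleton of X_σ induced by the edge signing f_{σ̂}(e) = sign(σ̂)·f(σ ∪ e), where sign(σ̂) = ∏_{v^j ∈ σ̂} j. -/
import Mathlib


open scoped Classical
noncomputable section

namespace HDX

variable {V W : Type*}

/-- sign of a Bool as an integer (`true ↦ 1`, `false ↦ -1`). -/
def sgn (b : Bool) : ℤ := if b then 1 else -1

/-- projection forgetting signs -/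
def proj [DecidableEq V] (σ : Finset (V × Bool)) : Finset V := σ.image Prod.fst

/-- product of the signs of a decorated face -/
def signF (σ : Finset (V × Bool)) : ℤ := ∏ x ∈ σ, sgn x.2

/-- the `f`-local lift of a `k`-dimensional complex `X` -/
def localLift [Fintype V] [DecidableEq V] (X : Finset (Finset V)) (f : Finset V → ℤ)
    (k : ℕ) : Finset (Finset (V × Bool)) :=
  Finset.univ.filter (fun σ' => proj σ' ∈ X ∧ σ'.card = (proj σ').card ∧
    (σ'.card = k + 1 → signF σ' = f (proj σ')))

/-- the link of a face -/
def link [DecidableEq W] (X : Finset (Finset W)) (σ : Finset W) : Finset (Finset W) :=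
  (X.filter (fun τ => σ ⊆ τ)).image (fun τ => τ \ σ)

/-- degree of a face: the number of faces of one higher dimension containing it -/
def deg [DecidableEq W] (X : Finset (Finset W)) (σ : Finset W) : ℕ :=
  (X.filter (fun τ => σ ⊆ τ ∧ τ.card = σ.card + 1)).card

/-- a simplicial complex: downward closed (to nonempty subsets) -/
def DownwardClosed (X : Finset (Finset W)) : Prop :=
  ∀ τ ∈ X, ∀ σ : Finset W, σ ⊆ τ → σ.Nonempty → σ ∈ X

/-- pure `k`-dimensional -/
def Pure (X : Finset (Finset W)) (k : ℕ) : Prop :=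
  (∀ τ ∈ X, τ.card ≤ k + 1) ∧ ∀ τ ∈ X, ∃ ρ ∈ X, τ ⊆ ρ ∧ ρ.card = k + 1

/-- `(d 0, …, d (k-1))`-regular -/
def Regular (X : Finset (Finset W)) (k : ℕ) (d : ℕ → ℕ) : Prop :=
  ∀ i < k, ∀ σ ∈ X, σ.card = i + 1 → deg X σ = d i

/-- the vertices of the link of `σ` -/
def linkVert [DecidableEq W] (X : Finset (Finset W)) (σ : Finset W) : Type _ :=
  {v : W // {v} ∈ link X σ}

instance [Fintype W] [DecidableEq W] (X : Finset (Finset W)) (σ : Finset W) :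
    Fintype (linkVert X σ) := Subtype.fintype _

instance [DecidableEq W] (X : Finset (Finset W)) (σ : Finset W) :
    DecidableEq (linkVert X σ) := Subtype.instDecidableEq

/-- random walk matrix of the 1-skeleton of the link of `σ`, normalized by `dreg` -/
def linkRW [Fintype W] [DecidableEq W] (X : Finset (Finset W)) (σ : Finset W) (dreg : ℕ) :
    Matrix (linkVert X σ) (linkVert X σ) ℝ :=
  fun u w => if u.1 ≠ w.1 ∧ {u.1, w.1} ∈ link X σ then (dreg : ℝ)⁻¹ else 0

/-- signed random walk matrix of the 1-skeleton of the link of `σ` -/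
def linkRWSigned [Fintype W] [DecidableEq W] (X : Finset (Finset W)) (σ : Finset W)
    (dreg : ℕ) (g : Finset W → ℤ) : Matrix (linkVert X σ) (linkVert X σ) ℝ :=
  fun u w => if u.1 ≠ w.1 ∧ {u.1, w.1} ∈ link X σ then (g {u.1, w.1} : ℝ) / (dreg : ℝ) else 0

/-- largest absolute value of the eigenvalues other than (one copy of) the trivial
eigenvalue `1`, of a matrix: computed via the roots of the characteristic polynomial. -/
def lam {n : Type*} [Fintype n] [DecidableEq n] (M : Matrix n n ℝ) : ℝ :=
  (((M.charpoly.roots).erase 1).map (fun x => |x|)).fold max 0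

/-- `λ`-two sided high dimensional expander (links normalized by their regular degrees) -/
def IsHDX [Fintype W] [DecidableEq W] (X : Finset (Finset W)) (k : ℕ) (d : ℕ → ℕ)
    (l : ℝ) : Prop :=
  ∀ σ : Finset W, (σ = ∅ ∨ σ ∈ X) → σ.card ≤ k - 1 → lam (linkRW X σ (d σ.card)) ≤ l

/-- the ordered pairs in `S × T` that form an edge of the link of `σ` -/
def pairs [DecidableEq W] (X : Finset (Finset W)) (σ : Finset W) (S T : Finset W) :
    Finset (W × W) :=
  (S ×ˢ T).filter (fun p => p.1 ≠ p.2 ∧ {p.1, p.2} ∈ link X σ)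

/-- `⟨1_S, A_σ 1_T⟩` for the random walk matrix of the link of `σ` -/
def innerRW [DecidableEq W] (X : Finset (Finset W)) (σ : Finset W) (dtop : ℕ)
    (S T : Finset W) : ℝ :=
  ((pairs X σ S T).card : ℝ) / (dtop : ℝ)

/-- `⟨1_S, A_σ^g 1_T⟩` for the `g`-signed random walk matrix of the link of `σ` -/
def innerRWSigned [DecidableEq W] (X : Finset (Finset W)) (σ : Finset W) (dtop : ℕ)
    (g : Finset W → ℤ) (S T : Finset W) : ℝ :=
  (∑ p ∈ pairs X σ S T, (g {p.1, p.2} : ℝ)) / (dtop : ℝ)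

/-- `(β, t)`-sparseness -/
def IsSparse [Fintype W] [DecidableEq W] (X : Finset (Finset W)) (k dtop : ℕ)
    (β t : ℝ) : Prop :=
  ∀ σ ∈ X, σ.card = k - 1 → ∀ S T : Finset W,
    (∀ v ∈ S ∪ T, {v} ∈ link X σ) → ((S ∪ T).card : ℝ) ≤ t →
    innerRW X σ dtop S T ≤ β * Real.sqrt ((S.card : ℝ) * (T.card : ℝ))


lemma mem_link_iff [DecidableEq W] {X : Finset (Finset W)} {σ ρ : Finset W} :
    ρ ∈ link X σ ↔ Disjoint σ ρ ∧ σ ∪ ρ ∈ X := by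
  constructor
  · intro h
    simp only [link, Finset.mem_image, Finset.mem_filter] at h
    obtain ⟨τ, ⟨hτ, hsub⟩, hd⟩ := h
    subst hd
    exact ⟨Finset.disjoint_sdiff, by rwa [Finset.union_sdiff_of_subset hsub]⟩
  · rintro ⟨hd, hX⟩
    simp only [link, Finset.mem_image, Finset.mem_filter]
    exact ⟨σ ∪ ρ, ⟨hX, Finset.subset_union_left⟩, Finset.union_sdiff_cancel_left hd⟩

lemma signF_sq (σ : Finset (V × Bool)) : signF σ * signF σ = 1 := by
  rw [signF, ← Finset.prod_mul_distrib]
  apply Finset.prod_eq_one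
  intro x _
  cases x.2 <;> simp [sgn]

lemma sign_flip {A x y : ℤ} (hA : A * A = 1) : A * x = y ↔ x = A * y := by
  constructor <;> intro h
  · rw [← h, ← mul_assoc, hA, one_mul]
  · rw [h, ← mul_assoc, hA, one_mul]

lemma inj_of_card [DecidableEq V] {τ : Finset (V × Bool)} (h : τ.card = (proj τ).card) :
    Set.InjOn Prod.fst (τ : Set (V × Bool)) := Finset.card_image_iff.mp h.symm

/-- for a `(k-2)`-face `σ'` of the `f`-local lift (so `|σ'| = k-1`)
with `σ = π(σ')`, the link of `σ'` in the lift is isomorphic (via the identity on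
underlying data) to the 2-lift of the 1-skeleton of the link `X_σ` induced by the
edge signing `f_{σ'}(e) = sign(σ')·f(σ ∪ e)`: both signed copies of each link vertex
appear, and `{(v,i),(u,j)}` is an edge iff `{v,u}` is an edge of `X_σ` and
`sgn i · sgn j = sign(σ')·f(σ ∪ {v,u})`. -/
theorem localLift_link_is_lift {V : Type*} [Fintype V] [DecidableEq V]
    (k : ℕ) (hk : 2 ≤ k) (X : Finset (Finset V)) (hdc : DownwardClosed X)
    (hpure : Pure X k) (f : Finset V → ℤ) (hf : ∀ τ, f τ = 1 ∨ f τ = -1)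
    (σ' : Finset (V × Bool)) (hmem : σ' ∈ localLift X f k) (hdim : σ'.card = k - 1) :
    (∀ (v : V) (i : Bool),
      ({(v, i)} : Finset (V × Bool)) ∈ link (localLift X f k) σ' ↔
        ({v} : Finset V) ∈ link X (proj σ')) ∧
    (∀ (v u : V) (i j : Bool), v ≠ u →
      (({(v, i), (u, j)} : Finset (V × Bool)) ∈ link (localLift X f k) σ' ↔
        (({v, u} : Finset V) ∈ link X (proj σ') ∧
          sgn i * sgn j = signF σ' * f (proj σ' ∪ {v, u})))) ∧
    (∀ (v : V) (i j : Bool), i ≠ j →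
      ({(v, i), (v, j)} : Finset (V × Bool)) ∉ link (localLift X f k) σ') := by

  simp only [localLift, Finset.mem_filter, Finset.mem_univ, true_and] at hmem
  obtain ⟨hX, hcard, -⟩ := hmem
  have key : ∀ (s : Finset (V × Bool)), Disjoint σ' s → σ' ∪ s ∈ localLift X f k →
      ∀ p ∈ s, p.1 ∉ proj σ' := by
    intro s hd hm p hp hv
    simp only [localLift, Finset.mem_filter, Finset.mem_univ, true_and] at hm
    have hinj2 := inj_of_card hm.2.1
    obtain ⟨x, hx, hx1⟩ := Finset.mem_image.mp hv
    have hxp : x = p := hinj2 (Finset.mem_coe.mpr (Finset.mem_union_left _ hx))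
      (Finset.mem_coe.mpr (Finset.mem_union_right _ hp)) hx1
    exact (Finset.disjoint_left.mp hd (hxp ▸ hx)) hp
  refine ⟨?_, ?_, ?_⟩
  · intro v i
    rw [mem_link_iff, mem_link_iff]
    have hp : proj (σ' ∪ {(v, i)}) = proj σ' ∪ {v} := by
      simp [proj, Finset.image_union]
    constructor
    · rintro ⟨hd, hm⟩
      have hv : v ∉ proj σ' := key _ hd hm (v, i) (Finset.mem_singleton_self _)
      simp only [localLift, Finset.mem_filter, Finset.mem_univ, true_and] at hm
      exact ⟨Finset.disjoint_singleton_right.mpr hv, hp ▸ hm.1⟩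
    · rintro ⟨hpd, hm⟩
      have hv : v ∉ proj σ' := Finset.disjoint_singleton_right.mp hpd
      have hvi : (v, i) ∉ σ' := fun h => hv (Finset.mem_image_of_mem _ h)
      have hd' : Disjoint σ' {(v, i)} := Finset.disjoint_singleton_right.mpr hvi
      refine ⟨hd', ?_⟩
      simp only [localLift, Finset.mem_filter, Finset.mem_univ, true_and]
      refine ⟨hp ▸ hm, ?_, ?_⟩
      · rw [hp, Finset.card_union_of_disjoint hd', Finset.card_union_of_disjoint hpd,
          hcard, Finset.card_singleton, Finset.card_singleton]
      · intro habs
        rw [Finset.card_union_of_disjoint hd', Finset.card_singleton, hdim] at habs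
        omega
  · intro v u i j hvu
    have hpne : ((v, i) : V × Bool) ≠ (u, j) := fun h => hvu (congrArg Prod.fst h)
    have hp : proj (σ' ∪ {(v, i), (u, j)}) = proj σ' ∪ {v, u} := by
      simp [proj, Finset.image_union, Finset.image_insert]
    rw [mem_link_iff, mem_link_iff]
    constructor
    · rintro ⟨hd, hm⟩
      have hv : v ∉ proj σ' := key _ hd hm (v, i) (by simp)
      have hu : u ∉ proj σ' := key _ hd hm (u, j) (by simp)
      have hpd : Disjoint (proj σ') ({v, u} : Finset V) := by
        rw [Finset.disjoint_right]
        intro a ha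
        simp only [Finset.mem_insert, Finset.mem_singleton] at ha
        rcases ha with h | h <;> subst h <;> assumption
      simp only [localLift, Finset.mem_filter, Finset.mem_univ, true_and] at hm
      obtain ⟨hm1, hm2, hm3⟩ := hm
      have hcc : (σ' ∪ {(v, i), (u, j)}).card = k + 1 := by
        rw [Finset.card_union_of_disjoint hd, Finset.card_pair hpne, hdim]
        omega
      have hsgn := hm3 hcc
      have hsplit : signF (σ' ∪ {(v, i), (u, j)}) = signF σ' * (sgn i * sgn j) := by
        rw [signF, Finset.prod_union hd, Finset.prod_pair hpne]; rfl
      rw [hsplit, hp] at hsgn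
      exact ⟨⟨hpd, hp ▸ hm1⟩, (sign_flip (signF_sq σ')).mp hsgn⟩
    · rintro ⟨⟨hpd, hm⟩, hsgn⟩
      have hv : v ∉ proj σ' := Finset.disjoint_right.mp hpd (by simp)
      have hu : u ∉ proj σ' := Finset.disjoint_right.mp hpd (by simp)
      have hvi : (v, i) ∉ σ' := fun h => hv (Finset.mem_image_of_mem _ h)
      have huj : (u, j) ∉ σ' := fun h => hu (Finset.mem_image_of_mem _ h)
      have hd : Disjoint σ' {(v, i), (u, j)} := by
        rw [Finset.disjoint_right]
        intro a ha
        simp only [Finset.mem_insert, Finset.mem_singleton] at ha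
        rcases ha with h | h <;> subst h <;> assumption
      refine ⟨hd, ?_⟩
      simp only [localLift, Finset.mem_filter, Finset.mem_univ, true_and]
      refine ⟨hp ▸ hm, ?_, ?_⟩
      · rw [hp, Finset.card_union_of_disjoint hd, Finset.card_union_of_disjoint hpd,
          hcard, Finset.card_pair hpne, Finset.card_pair hvu]
      · intro _
        have hsplit : signF (σ' ∪ {(v, i), (u, j)}) = signF σ' * (sgn i * sgn j) := by
          rw [signF, Finset.prod_union hd, Finset.prod_pair hpne]; rfl
        rw [hsplit, hp]
        exact (sign_flip (signF_sq σ')).mpr hsgn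
  · intro v i j hij hmemL
    rw [mem_link_iff] at hmemL
    obtain ⟨hd, hm⟩ := hmemL
    simp only [localLift, Finset.mem_filter, Finset.mem_univ, true_and] at hm
    have hinj2 := inj_of_card hm.2.1
    have h1 : ((v, i) : V × Bool) ∈ ↑(σ' ∪ {(v, i), (v, j)}) := by simp
    have h2 : ((v, j) : V × Bool) ∈ ↑(σ' ∪ {(v, i), (v, j)}) := by simp
    exact hij (congrArg Prod.snd (hinj2 h1 h2 rfl))


end HDX
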